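/- Let Γ be a graph and let Γ₀ be a subgraph with connected components Γ₁, …, Γₙ. Let Γ′ be the graph obtained from Γ by collapsing each component Γᵢ to a single vertex gᵢ ∈ Γᵢ (identifying all vertices of Γᵢ to gᵢ and deleting the edges of Γᵢ). Then Γ is a forest relative to Γ₀ if and only if Γ′ is a forest. -/

import Mathlib

/-- A multigraph: each element of the edge index type `E` has two (possibly equal)
endpoints in `V`; loops and multiple edges are allowed. -/
structure Multigraph (V E : Type) where
  fst : E → V
  snd : E → V

namespace Multigraph

variable {V E : Type}

/-- The initial vertex of a dart (an edge together with an orientation). -/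
def dstart (G : Multigraph V E) (d : E × Bool) : V := if d.2 then G.fst d.1 else G.snd d.1

/-- The final vertex of a dart. -/
def dfin (G : Multigraph V E) (d : E × Bool) : V := if d.2 then G.snd d.1 else G.fst d.1

/-- An edge cycle: a nonempty list of darts in which consecutive darts match up, cyclically. -/
def IsCycle (G : Multigraph V E) (c : List (E × Bool)) : Prop :=
  c ≠ [] ∧ List.Chain' (fun d d' => G.dfin d = G.dstart d') c ∧
    ∀ h : c ≠ [], G.dfin (c.getLast h) = G.dstart (c.head h)

/-- A cycle is homology reduced relative to an edge set `E₀` if it does not contain a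
pair of darts, with underlying edge outside `E₀`, that are reverses of each other. -/
def HomReducedRel (E₀ : Set E) (c : List (E × Bool)) : Prop :=
  ∀ d ∈ c, d.1 ∉ E₀ → (d.1, !d.2) ∉ c

/-- A cycle is homology reduced if it does not contain a dart together with its reverse. -/
def HomReduced (c : List (E × Bool)) : Prop := HomReducedRel (∅ : Set E) c

/-- `G` is a forest relative to the subgraph with edge set `E₀`: every cycle which is
homology reduced relative to `E₀` is contained in `E₀`. -/
def IsForestRel (G : Multigraph V E) (E₀ : Set E) : Prop :=
  ∀ c, G.IsCycle c → HomReducedRel E₀ c → ∀ d ∈ c, d.1 ∈ E₀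

/-- A forest: there is no nonempty homology reduced cycle. -/
def IsForest (G : Multigraph V E) : Prop := G.IsForestRel ∅

/-- Two vertices are adjacent if they are the two endpoints of some edge. -/
def Adj (G : Multigraph V E) (v w : V) : Prop :=
  ∃ e, (G.fst e = v ∧ G.snd e = w) ∨ (G.fst e = w ∧ G.snd e = v)

/-- A multigraph is connected if any two vertices are joined by an edge path. -/
def Connected (G : Multigraph V E) : Prop := ∀ v w, Relation.ReflTransGen G.Adj v w

/-- A tree: connected and a forest. -/
def IsTree (G : Multigraph V E) : Prop := G.Connected ∧ G.IsForest

/-- A tree relative to the subgraph with edge set `E₀`. -/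
def IsTreeRel (G : Multigraph V E) (E₀ : Set E) : Prop := G.Connected ∧ G.IsForestRel E₀

/-- Reachability inside the subgraph with edge set `E₀`. -/
def ReachIn (G : Multigraph V E) (E₀ : Set E) : V → V → Prop :=
  Relation.ReflTransGen fun a b =>
    ∃ e ∈ E₀, (G.fst e = a ∧ G.snd e = b) ∨ (G.fst e = b ∧ G.snd e = a)

end Multigraph

namespace ForestAux

open Multigraph

variable {α β : Type}

/-- A walk: list of darts from `x` to `y`. -/
def Wk (st fn : α → β) : β → List α → β → Prop
  | x, [], y => x = y
  | x, d :: l, y => st d = x ∧ Wk st fn (fn d) l y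

variable {st fn : α → β}

theorem wk_append {x m y : β} : ∀ {l₁ l₂ : List α}, Wk st fn x l₁ m → Wk st fn m l₂ y →
    Wk st fn x (l₁ ++ l₂) y := by
  intro l₁
  induction l₁ generalizing x with
  | nil => intro l₂ h1 h2; cases h1; exact h2
  | cons d l ih => intro l₂ h1 h2; exact ⟨h1.1, ih h1.2 h2⟩

theorem chain'_of_wk : ∀ {l : List α} {x y : β}, Wk st fn x l y →
    List.Chain' (fun d d' => fn d = st d') l := by
  intro l
  induction l with
  | nil => intro x y _; exact List.isChain_nil
  | cons d l ih =>
    intro x y h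
    rcases l with _ | ⟨d', l'⟩
    · exact List.isChain_singleton _
    · exact List.isChain_cons_cons.2 ⟨h.2.1.symm, ih h.2⟩

theorem wk_head_last : ∀ {l : List α} {x y : β}, Wk st fn x l y → ∀ h : l ≠ [],
    st (l.head h) = x ∧ fn (l.getLast h) = y := by
  intro l
  induction l with
  | nil => intro x y _ h; exact absurd rfl h
  | cons d l ih =>
    intro x y hw h
    rcases l with _ | ⟨d', l'⟩
    · exact ⟨hw.1, hw.2⟩
    · refine ⟨hw.1, ?_⟩
      rw [List.getLast_cons (by simp)]
      exact (ih hw.2 (by simp)).2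

theorem wk_of_chain' : ∀ {l : List α}, List.Chain' (fun d d' => fn d = st d') l →
    ∀ h : l ≠ [], Wk st fn (st (l.head h)) l (fn (l.getLast h)) := by
  intro l
  induction l with
  | nil => intro _ h; exact absurd rfl h
  | cons d l ih =>
    intro hc h
    rcases l with _ | ⟨d', l'⟩
    · exact ⟨rfl, rfl⟩
    · rcases List.isChain_cons_cons.1 hc with ⟨h1, h2⟩
      refine ⟨rfl, ?_⟩
      rw [List.getLast_cons (by simp)]
      have := ih h2 (by simp)
      rwa [show (d' :: l').head (by simp) = d' from rfl, ← h1] at this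

variable {V E : Type}

-- The dart projection from `G` to the collapsed graph.
open Classical in
noncomputable def F (E₀ : Set E) : E × Bool → Option ({e : E // e ∉ E₀} × Bool) :=
  fun d => if h : d.1 ∈ E₀ then none else some ((⟨d.1, h⟩ : {e : E // e ∉ E₀}), d.2)

theorem F_pos {E₀ : Set E} {d : E × Bool} (h : d.1 ∈ E₀) : F E₀ d = none := by
  simp [F, h]

theorem F_neg {E₀ : Set E} {d : E × Bool} (h : d.1 ∉ E₀) :
    F E₀ d = some ((⟨d.1, h⟩ : {e : E // e ∉ E₀}), d.2) := by
  simp [F, h]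

/-- The collapsed graph. -/
def Gq (G : Multigraph V E) (E₀ : Set E) (π : V → V) : Multigraph V {e : E // e ∉ E₀} :=
  ⟨fun e => π (G.fst e.1), fun e => π (G.snd e.1)⟩

theorem Gq_dstart (G : Multigraph V E) (E₀ : Set E) (π : V → V)
    (d' : {e : E // e ∉ E₀} × Bool) :
    (Gq G E₀ π).dstart d' = π (G.dstart (d'.1.1, d'.2)) := by
  rcases d' with ⟨⟨e, he⟩, b⟩; cases b <;> rfl

theorem Gq_dfin (G : Multigraph V E) (E₀ : Set E) (π : V → V)
    (d' : {e : E // e ∉ E₀} × Bool) :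
    (Gq G E₀ π).dfin d' = π (G.dfin (d'.1.1, d'.2)) := by
  rcases d' with ⟨⟨e, he⟩, b⟩; cases b <;> rfl

theorem reach_symm {G : Multigraph V E} {E₀ : Set E} {x y : V}
    (h : G.ReachIn E₀ x y) : G.ReachIn E₀ y x :=
  Std.Symm.symm (self := @Relation.ReflTransGen.symmetric _
    (fun a b => ∃ e ∈ E₀, (G.fst e = a ∧ G.snd e = b) ∨ (G.fst e = b ∧ G.snd e = a))
    ⟨fun _ _ ⟨e, he, hor⟩ => ⟨e, he, hor.symm⟩⟩) _ _ h

section Collapse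

variable {G : Multigraph V E} {V₀ : Set V} {E₀ : Set E} {π : V → V}

theorem pi_reach (hfix : ∀ v ∉ V₀, π v = v) (hcomp : ∀ v ∈ V₀, G.ReachIn E₀ v (π v))
    (hglue : ∀ v ∈ V₀, ∀ w ∈ V₀, (π v = π w ↔ G.ReachIn E₀ v w))
    {x y : V} (h : π x = π y) : G.ReachIn E₀ x y := by
  by_cases hx : x ∈ V₀ <;> by_cases hy : y ∈ V₀
  · exact (hglue x hx y hy).1 h
  · rw [hfix y hy] at h
    have := hcomp x hx; rwa [h] at this
  · rw [hfix x hx] at h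
    exact reach_symm (h ▸ hcomp y hy)
  · rw [hfix x hx, hfix y hy] at h
    exact h ▸ Relation.ReflTransGen.refl

theorem reach_walk {x y : V} (h : G.ReachIn E₀ x y) :
    ∃ l, Wk G.dstart G.dfin x l y ∧ ∀ d ∈ l, d.1 ∈ E₀ := by
  induction h with
  | refl => exact ⟨[], rfl, by simp⟩
  | tail hxb hbc ih =>
    obtain ⟨l, hw, hmem⟩ := ih
    obtain ⟨e, he, hor⟩ := hbc
    rcases hor with ⟨h1, h2⟩ | ⟨h1, h2⟩
    · refine ⟨l ++ [(e, true)], wk_append hw ⟨?_, ?_⟩, ?_⟩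
      · simpa [Multigraph.dstart] using h1
      · simpa [Multigraph.dfin, Wk] using h2
      · intro d hd
        rcases List.mem_append.1 hd with hd | hd
        · exact hmem d hd
        · simp at hd; rw [hd]; exact he
    · refine ⟨l ++ [(e, false)], wk_append hw ⟨?_, ?_⟩, ?_⟩
      · simpa [Multigraph.dstart] using h2
      · simpa [Multigraph.dfin, Wk] using h1
      · intro d hd
        rcases List.mem_append.1 hd with hd | hd
        · exact hmem d hd
        · simp at hd; rw [hd]; exact he

theorem pi_dart (hsub : ∀ e ∈ E₀, G.fst e ∈ V₀ ∧ G.snd e ∈ V₀)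
    (hglue : ∀ v ∈ V₀, ∀ w ∈ V₀, (π v = π w ↔ G.ReachIn E₀ v w))
    {d : E × Bool} (h : d.1 ∈ E₀) : π (G.dstart d) = π (G.dfin d) := by
  have key : π (G.fst d.1) = π (G.snd d.1) :=
    (hglue _ (hsub d.1 h).1 _ (hsub d.1 h).2).2
      (Relation.ReflTransGen.single ⟨d.1, h, Or.inl ⟨rfl, rfl⟩⟩)
  rcases d with ⟨e, b⟩
  cases b
  · simpa [Multigraph.dstart, Multigraph.dfin] using key.symm
  · simpa [Multigraph.dstart, Multigraph.dfin] using key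

theorem proj_walk (hsub : ∀ e ∈ E₀, G.fst e ∈ V₀ ∧ G.snd e ∈ V₀)
    (hglue : ∀ v ∈ V₀, ∀ w ∈ V₀, (π v = π w ↔ G.ReachIn E₀ v w)) :
    ∀ {l : List (E × Bool)} {x y : V}, Wk G.dstart G.dfin x l y →
    Wk (Gq G E₀ π).dstart (Gq G E₀ π).dfin (π x) (l.filterMap (F E₀)) (π y) := by
  intro l
  induction l with
  | nil => intro x y h; cases h; rfl
  | cons d l ih =>
    intro x y hw
    obtain ⟨h1, h2⟩ := hw
    by_cases h : d.1 ∈ E₀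
    · rw [List.filterMap_cons_none (F_pos h)]
      have := ih h2
      rwa [← pi_dart hsub hglue h, h1] at this
    · rw [List.filterMap_cons_some (F_neg h)]
      refine ⟨?_, ?_⟩
      · rw [Gq_dstart]; exact congrArg π h1
      · have := ih h2
        rwa [← Gq_dfin G E₀ π ((⟨d.1, h⟩ : {e : E // e ∉ E₀}), d.2)] at this

theorem lift_walk (hsub : ∀ e ∈ E₀, G.fst e ∈ V₀ ∧ G.snd e ∈ V₀)
    (hfix : ∀ v ∉ V₀, π v = v) (hcomp : ∀ v ∈ V₀, G.ReachIn E₀ v (π v))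
    (hglue : ∀ v ∈ V₀, ∀ w ∈ V₀, (π v = π w ↔ G.ReachIn E₀ v w)) :
    ∀ {l' : List ({e : E // e ∉ E₀} × Bool)} {a b : V},
    Wk (Gq G E₀ π).dstart (Gq G E₀ π).dfin a l' b → ∀ x, π x = a →
    ∃ l y, Wk G.dstart G.dfin x l y ∧ π y = b ∧ l.filterMap (F E₀) = l' := by
  intro l'
  induction l' with
  | nil => intro a b h x hx; exact ⟨[], x, rfl, hx.trans h, by simp⟩
  | cons d' l' ih =>
    intro a b h x hx
    obtain ⟨h1, h2⟩ := h
    have hpi : π x = π (G.dstart (d'.1.1, d'.2)) := by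
      rw [hx, ← h1, Gq_dstart]
    obtain ⟨l₀, hw₀, hmem₀⟩ := reach_walk (pi_reach hfix hcomp hglue hpi)
    obtain ⟨l₁, y, hw₁, hy, hfm⟩ := ih h2 (G.dfin (d'.1.1, d'.2)) (Gq_dfin G E₀ π d').symm
    refine ⟨l₀ ++ (d'.1.1, d'.2) :: l₁, y, wk_append hw₀ ⟨rfl, hw₁⟩, hy, ?_⟩
    have h0 : l₀.filterMap (F E₀) = [] :=
      List.filterMap_eq_nil_iff.2 fun d hd => F_pos (hmem₀ d hd)
    rw [List.filterMap_append, h0,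
      List.filterMap_cons_some (F_neg d'.1.2), hfm]
    rfl

end Collapse

end ForestAux


/-- **Collapsing the components of a subgraph.**
Let `Γ` be a multigraph, `Γ₀` the subgraph given by the vertex set `V₀` and the edge
set `E₀`, and let `π : V → V` collapse each connected component of `Γ₀` to a chosen
vertex of that component, leaving all other vertices fixed.  Let `Γ'` be the graph
obtained from `Γ` by deleting the edges of `Γ₀` and identifying vertices along `π`.
Then `Γ` is a forest relative to `Γ₀` if and only if `Γ'` is a forest. -/
theorem forestRel_iff_collapse_forest {V E : Type} (G : Multigraph V E)
    (V₀ : Set V) (E₀ : Set E)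
    (hsub : ∀ e ∈ E₀, G.fst e ∈ V₀ ∧ G.snd e ∈ V₀)
    (π : V → V)
    (hfix : ∀ v ∉ V₀, π v = v)
    (hcomp : ∀ v ∈ V₀, G.ReachIn E₀ v (π v))
    (hglue : ∀ v ∈ V₀, ∀ w ∈ V₀, (π v = π w ↔ G.ReachIn E₀ v w)) :
    G.IsForestRel E₀ ↔
      Multigraph.IsForest
        (⟨fun e : {e : E // e ∉ E₀} => π (G.fst e.1),
          fun e : {e : E // e ∉ E₀} => π (G.snd e.1)⟩ : Multigraph V {e : E // e ∉ E₀})  := by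
  classical
  show G.IsForestRel E₀ ↔ (ForestAux.Gq G E₀ π).IsForest
  set Gq := ForestAux.Gq G E₀ π with hGq
  constructor
  · -- forward: G forest rel E₀ → collapsed graph is a forest
    intro hG c' hc' hred' d₀' hd₀'
    exfalso
    obtain ⟨hne', hch', hwrap'⟩ := hc'
    have hw' := ForestAux.wk_of_chain' hch' hne'
    rw [hwrap' hne'] at hw'
    set a := Gq.dstart (c'.head hne') with ha
    set d₁ := c'.head hne' with hd₁
    have hx : π (G.dstart (d₁.1.1, d₁.2)) = a := (ForestAux.Gq_dstart G E₀ π d₁).symm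
    obtain ⟨l, y, hwl, hy, hfm⟩ :=
      ForestAux.lift_walk hsub hfix hcomp hglue hw' (G.dstart (d₁.1.1, d₁.2)) hx
    obtain ⟨l₂, hw₂, hmem₂⟩ :=
      ForestAux.reach_walk (G := G)
        (ForestAux.pi_reach hfix hcomp hglue (hy.trans hx.symm))
    set c := l ++ l₂ with hc
    have hwc : ForestAux.Wk G.dstart G.dfin (G.dstart (d₁.1.1, d₁.2)) c
        (G.dstart (d₁.1.1, d₁.2)) := ForestAux.wk_append hwl hw₂
    have hfmc : c.filterMap (ForestAux.F E₀) = c' := by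
      rw [hc, List.filterMap_append, hfm,
        List.filterMap_eq_nil_iff.2 fun d hd => ForestAux.F_pos (hmem₂ d hd),
        List.append_nil]
    have hne : c ≠ [] := by
      intro h
      rw [h] at hfmc
      exact hne' hfmc.symm
    have hcyc : G.IsCycle c := by
      refine ⟨hne, ForestAux.chain'_of_wk hwc, fun h => ?_⟩
      obtain ⟨hh, hl⟩ := ForestAux.wk_head_last hwc h
      exact hl.trans hh.symm
    have hred : Multigraph.HomReducedRel E₀ c := by
      intro d hd hdE hrev
      have h1 : ((⟨d.1, hdE⟩ : {e : E // e ∉ E₀}), d.2) ∈ c' := by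
        rw [← hfmc]
        exact List.mem_filterMap.2 ⟨d, hd, ForestAux.F_neg hdE⟩
      have h2 : ((⟨d.1, hdE⟩ : {e : E // e ∉ E₀}), !d.2) ∈ c' := by
        rw [← hfmc]
        exact List.mem_filterMap.2 ⟨(d.1, !d.2), hrev, ForestAux.F_neg (d := (d.1, !d.2)) hdE⟩
      exact hred' _ h1 (Set.notMem_empty _) h2
    obtain ⟨d, hd, hFd⟩ := List.mem_filterMap.1 (hfmc ▸ hd₀')
    have hdE : d.1 ∉ E₀ := by
      intro hcon
      rw [ForestAux.F_pos hcon] at hFd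
      exact Option.some_ne_none _ hFd.symm
    exact hdE (hG c hcyc hred d hd)
  · -- backward: collapsed graph a forest → G forest rel E₀
    intro hG' c hc hred d₀ hd₀
    by_contra h₀
    obtain ⟨hne, hch, hwrap⟩ := hc
    have hw := ForestAux.wk_of_chain' hch hne
    rw [hwrap hne] at hw
    have hpw := ForestAux.proj_walk hsub hglue (π := π) hw
    set c' := c.filterMap (ForestAux.F E₀) with hc'
    have hne' : c' ≠ [] :=
      List.ne_nil_of_mem (List.mem_filterMap.2 ⟨d₀, hd₀, ForestAux.F_neg h₀⟩)
    have hcyc' : Gq.IsCycle c' := by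
      refine ⟨hne', ForestAux.chain'_of_wk hpw, fun h => ?_⟩
      obtain ⟨hh, hl⟩ := ForestAux.wk_head_last hpw h
      exact hl.trans hh.symm
    have hred' : Multigraph.HomReduced c' := by
      intro d' hd' _ hrev'
      obtain ⟨d, hd, hFd⟩ := List.mem_filterMap.1 hd'
      obtain ⟨e, he, hFe⟩ := List.mem_filterMap.1 hrev'
      have hdE : d.1 ∉ E₀ := by
        intro hcon; rw [ForestAux.F_pos hcon] at hFd; exact Option.some_ne_none _ hFd.symm
      have heE : e.1 ∉ E₀ := by
        intro hcon; rw [ForestAux.F_pos hcon] at hFe; exact Option.some_ne_none _ hFe.symm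
      rw [ForestAux.F_neg hdE] at hFd
      rw [ForestAux.F_neg heE] at hFe
      have hd'1 : d' = ((⟨d.1, hdE⟩ : {e : E // e ∉ E₀}), d.2) := (Option.some.inj hFd).symm
      have he1 : ((⟨e.1, heE⟩ : {e : E // e ∉ E₀}), e.2) = (d'.1, !d'.2) := Option.some.inj hFe
      have he2 : e.1 = d.1 := by
        have := congrArg (fun p => p.1.1) he1
        simpa [hd'1] using this
      have he3 : e.2 = !d.2 := by
        have := congrArg (fun p => p.2) he1
        simpa [hd'1] using this
      have : (d.1, !d.2) ∈ c := by
        have : e = (d.1, !d.2) := Prod.ext he2 he3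
        rwa [this] at he
      exact hred d hd hdE this
    exact absurd (hG' c' hcyc' hred' (c'.head hne') (List.head_mem hne'))
      (Set.notMem_empty _)
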